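/- Let d ≥ 1 be an integer, M ≥ 0, R > 0, λ⁰ ∈ ℂ^d, and let φ be a holomorphic function on the open polydisk D_d(λ⁰,R) = {λ ∈ ℂ^d : |λ_j − λ⁰_j| < R for all j} with |φ(λ)| ≤ M for all λ ∈ D_d(λ⁰,R). Then there exists a holomorphic function φ̂ on the polydisk D_{2d}(ι(λ⁰), R/4) ⊆ ℂ^{2d} such that |φ̂(w)| ≤ 4^d·M for all w ∈ D_{2d}(ι(λ⁰),R/4), and φ̂(ι(λ)) = Re(φ(λ)) for all λ ∈ D_d(λ⁰, R/4). -/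

import Mathlib

noncomputable section

/-- The open polydisk in `ℂ^k` centered at `z` with radius `r`. -/
def polydisk (k : ℕ) (z : Fin k → ℂ) (r : ℝ) : Set (Fin k → ℂ) :=
  {w | ∀ j, ‖w j - z j‖ < r}

/-- The embedding `ι : ℂ^d → ℂ^{2d}`,
`ι(λ) = (Re λ₁, Im λ₁, Re λ₂, Im λ₂, …, Re λ_d, Im λ_d)`,
where the real numbers `Re λ_j`, `Im λ_j` are regarded as complex numbers. -/
def realImagEmb (d : ℕ) (l : Fin d → ℂ) : Fin (2 * d) → ℂ := fun j =>
  if j.val % 2 = 0 then ((l ⟨j.val / 2, by have := j.isLt; omega⟩).re : ℂ)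
  else ((l ⟨j.val / 2, by have := j.isLt; omega⟩).im : ℂ)

open Complex

/-- componentwise conjugation, as an `ℝ`-CLM. -/
def conjPi (d : ℕ) : (Fin d → ℂ) →L[ℝ] (Fin d → ℂ) :=
  ContinuousLinearMap.pi fun j =>
    (Complex.conjCLE.toContinuousLinearMap).comp (ContinuousLinearMap.proj j)

lemma conjPi_apply {d : ℕ} (μ : Fin d → ℂ) (j : Fin d) :
    conjPi d μ j = (starRingEnd ℂ) (μ j) := rfl

lemma conj_comp_diffOn {d : ℕ} {s : Set (Fin d → ℂ)} {φ : (Fin d → ℂ) → ℂ}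
    (hφ : DifferentiableOn ℂ φ s) :
    DifferentiableOn ℂ (fun μ => (starRingEnd ℂ) (φ (conjPi d μ))) (conjPi d ⁻¹' s) := by
  intro z hz
  have hzs : conjPi d z ∈ s := hz
  set L := fderivWithin ℂ φ s (conjPi d z) with hLdef
  have hL : HasFDerivWithinAt φ L s (conjPi d z) := (hφ _ hzs).hasFDerivWithinAt
  have hLr : HasFDerivWithinAt φ (L.restrictScalars ℝ) s (conjPi d z) := hL.restrictScalars ℝ
  have hC : HasFDerivWithinAt (conjPi d) (conjPi d) (conjPi d ⁻¹' s) z :=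
    (conjPi d).hasFDerivWithinAt
  have hmaps : Set.MapsTo (conjPi d) (conjPi d ⁻¹' s) s := fun μ hμ => hμ
  have hcomp : HasFDerivWithinAt (fun μ => φ (conjPi d μ))
      ((L.restrictScalars ℝ).comp (conjPi d)) (conjPi d ⁻¹' s) z := by
    exact hLr.comp z hC hmaps
  have hK : HasFDerivWithinAt (fun μ => (starRingEnd ℂ) (φ (conjPi d μ)))
      ((Complex.conjCLE.toContinuousLinearMap).comp
        ((L.restrictScalars ℝ).comp (conjPi d))) (conjPi d ⁻¹' s) z := by
    exact
      (Complex.conjCLE.toContinuousLinearMap.hasFDerivAt).comp_hasFDerivWithinAt z hcomp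
  -- the candidate ℂ-linear derivative
  set Mlin : (Fin d → ℂ) →ₗ[ℂ] ℂ :=
    { toFun := fun v => (starRingEnd ℂ) (L (conjPi d v))
      map_add' := by intro a b; simp [map_add]
      map_smul' := by
        intro c v
        have h1 : conjPi d (c • v) = (starRingEnd ℂ c) • conjPi d v := by
          funext j; simp [conjPi_apply]
        simp [h1, map_smul, smul_eq_mul] } with hMdef
  set Mc : (Fin d → ℂ) →L[ℂ] ℂ := Mlin.toContinuousLinearMap with hMcdef
  refine ⟨Mc, hK.of_restrictScalars ℝ ?_⟩
  ext v
  simp [hMcdef, hMdef, Function.comp]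

theorem stmt0 (d : ℕ) (hd : 1 ≤ d) (M R : ℝ) (hM : 0 ≤ M) (hR : 0 < R)
    (l0 : Fin d → ℂ) (φ : (Fin d → ℂ) → ℂ)
    (hφ : DifferentiableOn ℂ φ (polydisk d l0 R))
    (hbd : ∀ l ∈ polydisk d l0 R, ‖φ l‖ ≤ M) :
    ∃ ψ : (Fin (2 * d) → ℂ) → ℂ,
      DifferentiableOn ℂ ψ (polydisk (2 * d) (realImagEmb d l0) (R / 4)) ∧
      (∀ w ∈ polydisk (2 * d) (realImagEmb d l0) (R / 4),
        ‖ψ w‖ ≤ 4 ^ d * M) ∧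
      (∀ l ∈ polydisk d l0 (R / 4), ψ (realImagEmb d l) = ((φ l).re : ℂ)) := by
  classical
  -- index helpers
  have h0 : ∀ j : Fin d, 2 * j.1 < 2 * d := fun j => by have := j.2; omega
  have h1 : ∀ j : Fin d, 2 * j.1 + 1 < 2 * d := fun j => by have := j.2; omega
  set f : (Fin (2 * d) → ℂ) → (Fin d → ℂ) :=
    fun w j => w ⟨2 * j.1, h0 j⟩ + Complex.I * w ⟨2 * j.1 + 1, h1 j⟩ with hfdef
  set g : (Fin (2 * d) → ℂ) → (Fin d → ℂ) :=
    fun w j => w ⟨2 * j.1, h0 j⟩ - Complex.I * w ⟨2 * j.1 + 1, h1 j⟩ with hgdef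
  set Φ : (Fin d → ℂ) → ℂ := fun μ => (starRingEnd ℂ) (φ (conjPi d μ)) with hΦdef
  set ψ : (Fin (2 * d) → ℂ) → ℂ := fun w => (φ (f w) + Φ (g w)) / 2 with hψdef
  -- values of the embedding
  have hembe : ∀ (l : Fin d → ℂ) (j : Fin d),
      realImagEmb d l ⟨2 * j.1, h0 j⟩ = ((l j).re : ℂ) := by
    intro l j
    simp only [realImagEmb]
    rw [if_pos (Nat.mul_mod_right 2 j.1)]
    norm_num
  have hembo : ∀ (l : Fin d → ℂ) (j : Fin d),
      realImagEmb d l ⟨2 * j.1 + 1, h1 j⟩ = ((l j).im : ℂ) := by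
    intro l j
    simp only [realImagEmb]
    rw [if_neg (by omega)]
    have : (2 * j.1 + 1) / 2 = j.1 := by omega
    simp [this]
  -- maps-to facts
  have hfmaps : ∀ w ∈ polydisk (2 * d) (realImagEmb d l0) (R / 4),
      f w ∈ polydisk d l0 R := by
    intro w hw j
    have e0 := hw ⟨2 * j.1, h0 j⟩
    have e1 := hw ⟨2 * j.1 + 1, h1 j⟩
    rw [hembe l0 j] at e0
    rw [hembo l0 j] at e1
    have hx : l0 j = ((l0 j).re : ℂ) + Complex.I * ((l0 j).im : ℂ) := by
      rw [mul_comm]; exact (Complex.re_add_im (l0 j)).symm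
    have hrepr : f w j - l0 j = (w ⟨2 * j.1, h0 j⟩ - ((l0 j).re : ℂ))
        + Complex.I * (w ⟨2 * j.1 + 1, h1 j⟩ - ((l0 j).im : ℂ)) := by
      rw [hfdef]; simp only; conv_lhs => rw [hx]
      ring
    calc ‖f w j - l0 j‖
        = ‖(w ⟨2 * j.1, h0 j⟩ - ((l0 j).re : ℂ))
            + Complex.I * (w ⟨2 * j.1 + 1, h1 j⟩ - ((l0 j).im : ℂ))‖ := by rw [hrepr]
      _ ≤ ‖w ⟨2 * j.1, h0 j⟩ - ((l0 j).re : ℂ)‖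
            + ‖Complex.I * (w ⟨2 * j.1 + 1, h1 j⟩ - ((l0 j).im : ℂ))‖ :=
          norm_add_le _ _
      _ < R := by rw [norm_mul, Complex.norm_I, one_mul]; linarith
  have hgmaps : ∀ w ∈ polydisk (2 * d) (realImagEmb d l0) (R / 4),
      conjPi d (g w) ∈ polydisk d l0 R := by
    intro w hw j
    have e0 := hw ⟨2 * j.1, h0 j⟩
    have e1 := hw ⟨2 * j.1 + 1, h1 j⟩
    rw [hembe l0 j] at e0
    rw [hembo l0 j] at e1
    have e0' : ‖(starRingEnd ℂ) (w ⟨2 * j.1, h0 j⟩) - ((l0 j).re : ℂ)‖ < R / 4 := by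
      rw [show ((l0 j).re : ℂ) = (starRingEnd ℂ) ((l0 j).re : ℂ) by simp, ← map_sub,
        Complex.norm_conj]
      exact e0
    have e1' : ‖(starRingEnd ℂ) (w ⟨2 * j.1 + 1, h1 j⟩) - ((l0 j).im : ℂ)‖ < R / 4 := by
      rw [show ((l0 j).im : ℂ) = (starRingEnd ℂ) ((l0 j).im : ℂ) by simp, ← map_sub,
        Complex.norm_conj]
      exact e1
    have hx : l0 j = ((l0 j).re : ℂ) + Complex.I * ((l0 j).im : ℂ) := by
      rw [mul_comm]; exact (Complex.re_add_im (l0 j)).symm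
    have hval : conjPi d (g w) j =
        (starRingEnd ℂ) (w ⟨2 * j.1, h0 j⟩) + Complex.I * (starRingEnd ℂ) (w ⟨2 * j.1 + 1, h1 j⟩) := by
      rw [conjPi_apply, hgdef]
      simp only
      rw [map_sub, map_mul, Complex.conj_I]
      ring
    have hrepr : conjPi d (g w) j - l0 j = ((starRingEnd ℂ) (w ⟨2 * j.1, h0 j⟩) - ((l0 j).re : ℂ))
        + Complex.I * ((starRingEnd ℂ) (w ⟨2 * j.1 + 1, h1 j⟩) - ((l0 j).im : ℂ)) := by
      rw [hval]; conv_lhs => rw [hx]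
      ring
    calc ‖conjPi d (g w) j - l0 j‖
        = ‖((starRingEnd ℂ) (w ⟨2 * j.1, h0 j⟩) - ((l0 j).re : ℂ))
            + Complex.I * ((starRingEnd ℂ) (w ⟨2 * j.1 + 1, h1 j⟩) - ((l0 j).im : ℂ))‖ := by
          rw [hrepr]
      _ ≤ ‖(starRingEnd ℂ) (w ⟨2 * j.1, h0 j⟩) - ((l0 j).re : ℂ)‖
            + ‖Complex.I * ((starRingEnd ℂ) (w ⟨2 * j.1 + 1, h1 j⟩) - ((l0 j).im : ℂ))‖ :=
          norm_add_le _ _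
      _ < R := by rw [norm_mul, Complex.norm_I, one_mul]; linarith
  -- differentiability of the linear pieces
  have hfdiff : Differentiable ℂ f := by
    rw [hfdef]
    apply differentiable_pi.2
    intro j
    exact (differentiable_apply _).add ((differentiable_const _).mul (differentiable_apply _))
  have hgdiff : Differentiable ℂ g := by
    rw [hgdef]
    apply differentiable_pi.2
    intro j
    exact (differentiable_apply _).sub ((differentiable_const _).mul (differentiable_apply _))
  have hΦdiff : DifferentiableOn ℂ Φ (conjPi d ⁻¹' polydisk d l0 R) := conj_comp_diffOn hφ
  refine ⟨ψ, ?_, ?_, ?_⟩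
  · -- differentiability
    rw [hψdef]
    simp only [div_eq_mul_inv]
    apply DifferentiableOn.mul_const
    apply DifferentiableOn.add
    · exact hφ.comp (hfdiff.differentiableOn) hfmaps
    · exact hΦdiff.comp (hgdiff.differentiableOn) hgmaps
  · -- bound
    intro w hw
    have b1 : ‖φ (f w)‖ ≤ M := hbd _ (hfmaps w hw)
    have b2 : ‖Φ (g w)‖ ≤ M := by
      rw [hΦdef]; simpa [Complex.norm_conj] using hbd _ (hgmaps w hw)
    have h4 : (1 : ℝ) ≤ 4 ^ d := one_le_pow₀ (by norm_num : (1:ℝ) ≤ 4)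
    calc ‖ψ w‖ = ‖φ (f w) + Φ (g w)‖ / 2 := by
          rw [hψdef]; simp [norm_div]
      _ ≤ (‖φ (f w)‖ + ‖Φ (g w)‖) / 2 := by
          gcongr; exact norm_add_le _ _
      _ ≤ M := by linarith
      _ ≤ 4 ^ d * M := le_mul_of_one_le_left hM h4
  · -- value on the embedding
    intro l hl
    have hfv : f (realImagEmb d l) = l := by
      funext j
      rw [hfdef]
      simp only
      rw [hembe l j, hembo l j, mul_comm, Complex.re_add_im]
    have hgv : conjPi d (g (realImagEmb d l)) = l := by
      funext j
      rw [conjPi_apply, hgdef]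
      simp only
      rw [hembe l j, hembo l j, map_sub, map_mul, Complex.conj_I]
      apply Complex.ext <;> simp
    rw [hψdef]
    simp only
    rw [hfv, hΦdef]
    simp only
    rw [hgv]
    rw [Complex.add_conj]
    push_cast
    ring
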